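/- Let g_1, …, g_k be pairwise distinct monic irreducible polynomials in F_q[X] with nonzero constant terms, let b_i ≥ 1, and let s = s_1 + ⋯ + s_k and s'' = s_1' + ⋯ + s_k' where s_i, s_i' ∈ Ω(g_i^{b_i}) are nonzero and e_i denotes the least period of s_i. Then: (a) for every integer ℓ ≥ 0, L^ℓ s = s'' if and only if L^ℓ s_i = s_i' for every i; and (b) s and s'' are shift equivalent if and only if there exist integers ℓ_1, …, ℓ_k ≥ 0 such that L^{ℓ_i} s_i = s_i' for every i and gcd(e_i, e_j) divides ℓ_i − ℓ_j for all 1 ≤ i, j ≤ k. -/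

import Mathlib

open Polynomial

/-- The (left) shift operator `L` on sequences over `F`, as an `F`-linear endomorphism. -/
def shiftL (F : Type*) [CommSemiring F] : Module.End F (ℕ → F) where
  toFun s := fun i => s (i + 1)
  map_add' _ _ := rfl
  map_smul' _ _ := rfl

/-- For a polynomial `f`, the operator `f(L)` on sequences. -/
noncomputable def polyL {F : Type*} [CommSemiring F] (f : Polynomial F) :
    Module.End F (ℕ → F) :=
  Polynomial.aeval (shiftL F) f

/-- `Ω(f)`: the set of sequences annihilated by `f(L)`. -/
def OmegaSet {F : Type*} [CommSemiring F] (f : Polynomial F) : Set (ℕ → F) :=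
  {s | polyL f s = 0}

/-- Two sequences are shift equivalent if one is a shift of the other. -/
def ShiftEquiv {F : Type*} [CommSemiring F] (s s' : ℕ → F) : Prop :=
  ∃ ℓ : ℕ, s' = (shiftL F ^ ℓ) s

/-- The cycle (shift-equivalence class) of a sequence. -/
def seqCycle {F : Type*} [CommSemiring F] (s : ℕ → F) : Set (ℕ → F) :=
  {s' | ∃ ℓ : ℕ, s' = (shiftL F ^ ℓ) s}

/-- `N` is the least period of the sequence `s`. -/
def IsLeastPeriod {F : Type*} (s : ℕ → F) (N : ℕ) : Prop :=
  0 < N ∧ (∀ i, s (i + N) = s i) ∧ ∀ M : ℕ, 0 < M → (∀ i, s (i + M) = s i) → N ≤ M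

/-- `h` is the minimal polynomial of the sequence `s`: it is monic, annihilates `s`,
and divides every polynomial annihilating `s`. -/
def IsMinPolyOfSeq {F : Type*} [CommSemiring F] (s : ℕ → F) (h : Polynomial F) : Prop :=
  h.Monic ∧ polyL h s = 0 ∧ ∀ h' : Polynomial F, polyL h' s = 0 → h ∣ h'

/-- `e = ord(f)`: the least `N ≥ 1` with `f ∣ X^N - 1`. -/
def IsOrderOf {F : Type*} [CommRing F] (f : Polynomial F) (e : ℕ) : Prop :=
  0 < e ∧ f ∣ X ^ e - 1 ∧ ∀ N : ℕ, 0 < N → f ∣ X ^ N - 1 → e ≤ N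

section Aux

variable {F : Type*} [Field F]

lemma shift_pow_apply (s : ℕ → F) (ℓ n : ℕ) : ((shiftL F ^ ℓ) s) n = s (n + ℓ) := by
  induction ℓ generalizing s n with
  | zero => simp
  | succ m ih =>
    rw [pow_succ]
    show ((shiftL F ^ m) (shiftL F s)) n = _
    rw [ih]
    show s (n + m + 1) = _
    ring_nf

lemma polyL_shift_comm (f : Polynomial F) (ℓ : ℕ) (s : ℕ → F) :
    polyL f ((shiftL F ^ ℓ) s) = (shiftL F ^ ℓ) (polyL f s) := by
  have h : Commute (polyL f) (shiftL F ^ ℓ) := by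
    apply Commute.pow_right
    show polyL f * shiftL F = shiftL F * polyL f
    have h1 : shiftL F = polyL (X : Polynomial F) := by simp [polyL]
    rw [h1, polyL, polyL, ← map_mul, ← map_mul, mul_comm]
  calc polyL f ((shiftL F ^ ℓ) s) = (polyL f * shiftL F ^ ℓ) s := rfl
    _ = (shiftL F ^ ℓ * polyL f) s := by rw [h.eq]
    _ = _ := rfl

lemma omega_shift {f : Polynomial F} {s : ℕ → F} (hs : s ∈ OmegaSet f) (ℓ : ℕ) :
    (shiftL F ^ ℓ) s ∈ OmegaSet f := by
  show polyL f _ = 0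
  rw [polyL_shift_comm, hs.out, map_zero]

lemma omega_sub {f : Polynomial F} {s t : ℕ → F} (hs : s ∈ OmegaSet f) (ht : t ∈ OmegaSet f) :
    s - t ∈ OmegaSet f := by
  show polyL f _ = 0
  rw [map_sub, hs.out, ht.out, sub_zero]

lemma polyL_dvd_zero {f h : Polynomial F} {s : ℕ → F} (hfh : f ∣ h) (hs : polyL f s = 0) :
    polyL h s = 0 := by
  obtain ⟨q, rfl⟩ := hfh
  rw [polyL, mul_comm f q, map_mul]
  show polyL q (polyL f s) = 0
  rw [hs, map_zero]

lemma coprime_pows {k : ℕ} (g : Fin k → Polynomial F) (b : Fin k → ℕ)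
    (hmonic : ∀ i, (g i).Monic) (hirr : ∀ i, Irreducible (g i))
    (hdist : Function.Injective g) {i j : Fin k} (hij : i ≠ j) :
    IsCoprime ((g i) ^ (b i)) ((g j) ^ (b j)) := by
  apply IsCoprime.pow
  rw [(hirr i).coprime_iff_not_dvd]
  intro hdvd
  have : Associated (g i) (g j) :=
    (hirr i).associated_of_dvd (hirr j) hdvd
  exact hij (hdist (eq_of_monic_of_associated (hmonic i) (hmonic j) this))

lemma independence {k : ℕ} (g : Fin k → Polynomial F) (b : Fin k → ℕ)
    (hmonic : ∀ i, (g i).Monic) (hirr : ∀ i, Irreducible (g i))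
    (hdist : Function.Injective g)
    (t : Fin k → (ℕ → F)) (ht : ∀ i, t i ∈ OmegaSet ((g i) ^ (b i)))
    (hsum : ∑ i, t i = 0) : ∀ i, t i = 0 := by
  intro i
  set P : Polynomial F := ∏ j ∈ Finset.univ.erase i, (g j) ^ (b j) with hP
  have hcop : IsCoprime ((g i) ^ (b i)) P := by
    apply IsCoprime.prod_right
    intro j hj
    exact coprime_pows g b hmonic hirr hdist (Finset.ne_of_mem_erase hj).symm
  have hPkill : ∀ j, j ≠ i → polyL P (t j) = 0 := by
    intro j hj
    apply polyL_dvd_zero (f := (g j) ^ (b j))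
    · exact Finset.dvd_prod_of_mem _ (Finset.mem_erase.mpr ⟨hj, Finset.mem_univ j⟩)
    · exact ht j
  have hPti : polyL P (t i) = 0 := by
    have h1 : polyL P (∑ j, t j) = polyL P (t i) := by
      rw [map_sum]
      rw [Finset.sum_eq_single i]
      · intro j _ hj; exact hPkill j hj
      · intro h; exact absurd (Finset.mem_univ i) h
    rw [hsum, map_zero] at h1
    exact h1.symm
  obtain ⟨u, v, huv⟩ := hcop
  have : polyL (u * (g i) ^ (b i) + v * P) (t i) = t i := by
    rw [huv]; simp [polyL]
  rw [polyL, map_add, map_mul, map_mul] at this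
  have h2 : ((aeval (shiftL F)) u * (aeval (shiftL F)) ((g i) ^ (b i))) (t i) = 0 := by
    show polyL u (polyL ((g i)^(b i)) (t i)) = 0
    rw [(ht i).out, map_zero]
  have h3 : ((aeval (shiftL F)) v * (aeval (shiftL F)) P) (t i) = 0 := by
    show polyL v (polyL P (t i)) = 0
    rw [hPti, map_zero]
  have := this.symm
  rw [LinearMap.add_apply] at this
  rw [this, h2, h3, add_zero]

lemma gcd_lcm_dvd (a b c : ℕ) (ha : a ≠ 0) (hb : b ≠ 0) (hc : c ≠ 0) :
    Nat.gcd (Nat.lcm a b) c ∣ Nat.lcm (Nat.gcd a c) (Nat.gcd b c) := by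
  have hlcm : Nat.lcm a b ≠ 0 := Nat.lcm_ne_zero ha hb
  have hgac : Nat.gcd a c ≠ 0 := fun h => ha (Nat.eq_zero_of_gcd_eq_zero_left h)
  have hgbc : Nat.gcd b c ≠ 0 := fun h => hb (Nat.eq_zero_of_gcd_eq_zero_left h)
  have hL : Nat.gcd (Nat.lcm a b) c ≠ 0 := fun h => hc (Nat.eq_zero_of_gcd_eq_zero_right h)
  have hR : Nat.lcm (Nat.gcd a c) (Nat.gcd b c) ≠ 0 := Nat.lcm_ne_zero hgac hgbc
  rw [← Nat.factorization_le_iff_dvd hL hR]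
  rw [Nat.factorization_gcd hlcm hc, Nat.factorization_lcm ha hb,
    Nat.factorization_lcm hgac hgbc, Nat.factorization_gcd ha hc, Nat.factorization_gcd hb hc]
  rw [Finsupp.le_def]
  intro p
  rw [Finsupp.inf_apply, Finsupp.sup_apply, Finsupp.sup_apply, Finsupp.inf_apply,
    Finsupp.inf_apply]
  exact le_of_eq (min_max_distrib_right _ _ _)

lemma gcd_finset_lcm_dvd {ι : Type*} [DecidableEq ι] (s : Finset ι) (f : ι → ℕ) (c : ℕ) (hc : c ≠ 0)
    (hf : ∀ i ∈ s, f i ≠ 0) (z : ℤ) (h : ∀ i ∈ s, (Nat.gcd (f i) c : ℤ) ∣ z) :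
    (Nat.gcd (s.lcm f) c : ℤ) ∣ z := by
  induction s using Finset.induction with
  | empty => simp
  | @insert a s hnotmem ih =>
    rw [Finset.lcm_insert]
    have hfa : f a ≠ 0 := hf a (Finset.mem_insert_self a s)
    have hlcm : s.lcm f ≠ 0 := by
      intro h0
      obtain ⟨i, hi, hfi⟩ := (Finset.lcm_eq_zero_iff).mp h0
      exact hf i (Finset.mem_insert_of_mem hi) hfi
    have key := gcd_lcm_dvd (f a) (s.lcm f) c hfa hlcm hc
    have key' : (Nat.gcd (Nat.lcm (f a) (s.lcm f)) c : ℤ) ∣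
        (Nat.lcm (Nat.gcd (f a) c) (Nat.gcd (s.lcm f) c) : ℤ) := Int.natCast_dvd_natCast.mpr key
    apply dvd_trans key'
    have h1 : (Nat.gcd (f a) c : ℤ) ∣ z := h a (Finset.mem_insert_self a s)
    have h2 : (Nat.gcd (s.lcm f) c : ℤ) ∣ z :=
      ih (fun i hi => hf i (Finset.mem_insert_of_mem hi)) (fun i hi => h i (Finset.mem_insert_of_mem hi))
    have := Int.dvd_natAbs.mp (Int.natCast_dvd_natCast.mpr (Int.lcm_dvd (Int.dvd_natAbs.mpr h1) (Int.dvd_natAbs.mpr h2)))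
    rwa [Int.lcm, Int.natAbs_natCast, Int.natAbs_natCast] at this

lemma crt_general : ∀ (k : ℕ) (e : Fin k → ℕ), (∀ i, 0 < e i) → ∀ (a : Fin k → ℤ),
    (∀ i j, (Nat.gcd (e i) (e j) : ℤ) ∣ a i - a j) → ∃ L : ℤ, ∀ i, (e i : ℤ) ∣ L - a i := by
  intro k
  induction k with
  | zero => intro e _ a _; exact ⟨0, fun i => i.elim0⟩
  | succ n ih =>
    intro e he a hcompat
    obtain ⟨L', hL'⟩ := ih (fun i => e i.castSucc) (fun i => he _) (fun i => a i.castSucc)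
      (fun i j => hcompat _ _)
    set M : ℕ := Finset.univ.lcm (fun i : Fin n => e i.castSucc) with hM
    set c : ℕ := e (Fin.last n) with hc
    have hc0 : c ≠ 0 := (he _).ne'
    -- gcd M c divides L' - a last
    have hgcddvd : (Nat.gcd M c : ℤ) ∣ L' - a (Fin.last n) := by
      apply gcd_finset_lcm_dvd _ _ _ hc0 (fun i _ => (he _).ne')
      intro i _
      have d1 : (Nat.gcd (e i.castSucc) c : ℤ) ∣ L' - a i.castSucc :=
        dvd_trans (Int.natCast_dvd_natCast.mpr (Nat.gcd_dvd_left _ _)) (hL' i)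
      have d2 : (Nat.gcd (e i.castSucc) c : ℤ) ∣ a i.castSucc - a (Fin.last n) :=
        hcompat _ _
      have := dvd_add d1 d2
      simpa using this
    -- Bezout
    obtain ⟨t, ht⟩ := hgcddvd
    have hbez : (Nat.gcd M c : ℤ) = M * Int.gcdA M c + c * Int.gcdB M c := by
      have := Int.gcd_eq_gcd_ab (M : ℤ) (c : ℤ)
      rwa [Int.gcd_natCast_natCast] at this
    refine ⟨L' - t * (Int.gcdA M c) * M, ?_⟩
    intro i
    induction i using Fin.lastCases with
    | last =>
      show (c : ℤ) ∣ L' - t * (Int.gcdA M c) * M - a (Fin.last n)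
      have : L' - t * Int.gcdA M c * M - a (Fin.last n)
          = t * ((Nat.gcd M c : ℤ) - M * Int.gcdA M c) := by
        linear_combination ht
      rw [this, hbez]
      exact ⟨t * Int.gcdB M c, by ring⟩
    | cast j =>
      show (e j.castSucc : ℤ) ∣ L' - t * (Int.gcdA M c) * M - a j.castSucc
      have hdvdM : (e j.castSucc : ℤ) ∣ (M : ℤ) :=
        Int.natCast_dvd_natCast.mpr (Finset.dvd_lcm (Finset.mem_univ j))
      have h1 : (e j.castSucc : ℤ) ∣ L' - a j.castSucc := hL' j
      have : L' - t * Int.gcdA M c * M - a j.castSucc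
          = (L' - a j.castSucc) + (-(t * Int.gcdA M c)) * M := by ring
      rw [this]
      exact dvd_add h1 (Dvd.dvd.mul_left hdvdM _)

lemma period_mul {s : ℕ → F} {e : ℕ} (hper : ∀ m, s (m + e) = s m) :
    ∀ q m, s (m + q * e) = s m := by
  intro q
  induction q with
  | zero => simp
  | succ p ih =>
    intro m
    have : m + (p + 1) * e = (m + e) + p * e := by ring
    rw [this, ih, hper]

lemma period_shift_eq {s : ℕ → F} {e : ℕ} (hpos : 0 < e) (hper : ∀ m, s (m + e) = s m)
    {n ℓ : ℕ} (h : (e : ℤ) ∣ (n : ℤ) - (ℓ : ℤ)) :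
    (shiftL F ^ n) s = (shiftL F ^ ℓ) s := by
  have hmod : ℓ ≡ n [MOD e] := Nat.modEq_iff_dvd.mpr h
  have hmod' : ℓ % e = n % e := hmod
  funext m
  rw [shift_pow_apply, shift_pow_apply]
  have h1 : m + n = (m + n % e) + (n / e) * e := by
    rw [Nat.mul_comm]; have := Nat.div_add_mod n e; omega
  have h2 : m + ℓ = (m + ℓ % e) + (ℓ / e) * e := by
    rw [Nat.mul_comm]; have := Nat.div_add_mod ℓ e; omega
  rw [h1, h2, period_mul hper, period_mul hper, hmod']


end Aux

/-- for `s = s₁ + ⋯ + s_k`, `s'' = s₁' + ⋯ + s_k'` with nonzero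
`sᵢ, sᵢ' ∈ Ω(gᵢ^{bᵢ})` and `eᵢ` the least period of `sᵢ`:
(a) `L^ℓ s = s''` iff `L^ℓ sᵢ = sᵢ'` for all `i`; and
(b) `s`, `s''` are shift equivalent iff there are `ℓᵢ ≥ 0` with `L^{ℓᵢ} sᵢ = sᵢ'` for all
`i` and `gcd(eᵢ,eⱼ) ∣ ℓᵢ − ℓⱼ` for all `i, j`. -/
theorem stmt16 {F : Type*} [Field F] [Fintype F] (k : ℕ)
    (g : Fin k → Polynomial F) (b : Fin k → ℕ)
    (hmonic : ∀ i, (g i).Monic) (hirr : ∀ i, Irreducible (g i))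
    (hg0 : ∀ i, (g i).coeff 0 ≠ 0) (hdist : Function.Injective g)
    (hb : ∀ i, 1 ≤ b i)
    (sc sc' : Fin k → (ℕ → F))
    (hsc : ∀ i, sc i ∈ OmegaSet ((g i) ^ (b i)))
    (hsc' : ∀ i, sc' i ∈ OmegaSet ((g i) ^ (b i)))
    (hscne : ∀ i, sc i ≠ 0) (hscne' : ∀ i, sc' i ≠ 0)
    (e : Fin k → ℕ) (he : ∀ i, IsLeastPeriod (sc i) (e i)) :
    (∀ ℓ : ℕ, (shiftL F ^ ℓ) (∑ i, sc i) = ∑ i, sc' i ↔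
      ∀ i, (shiftL F ^ ℓ) (sc i) = sc' i) ∧
    (ShiftEquiv (∑ i, sc i) (∑ i, sc' i) ↔
      ∃ ℓ : Fin k → ℕ, (∀ i, (shiftL F ^ (ℓ i)) (sc i) = sc' i) ∧
        ∀ i j, ((Nat.gcd (e i) (e j) : ℤ)) ∣ ((ℓ i : ℤ) - (ℓ j : ℤ))) := by
  have partA : ∀ ℓ : ℕ, (shiftL F ^ ℓ) (∑ i, sc i) = ∑ i, sc' i ↔
      ∀ i, (shiftL F ^ ℓ) (sc i) = sc' i := by
    intro ℓ
    constructor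
    · intro h
      set t : Fin k → (ℕ → F) := fun i => (shiftL F ^ ℓ) (sc i) - sc' i with htdef
      have ht : ∀ i, t i ∈ OmegaSet ((g i) ^ (b i)) := fun i =>
        omega_sub (omega_shift (hsc i) ℓ) (hsc' i)
      have hsum : ∑ i, t i = 0 := by
        rw [htdef]
        rw [Finset.sum_sub_distrib, ← map_sum, h, sub_self]
      have := independence g b hmonic hirr hdist t ht hsum
      intro i
      have hi := this i
      rw [htdef] at hi
      exact sub_eq_zero.mp hi
    · intro h
      rw [map_sum]
      exact Finset.sum_congr rfl (fun i _ => h i)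
  refine ⟨partA, ?_, ?_⟩
  · rintro ⟨ℓ, hl⟩
    refine ⟨fun _ => ℓ, (partA ℓ).mp hl.symm, fun i j => by simp⟩
  · rintro ⟨ℓv, hshift, hcompat⟩
    obtain ⟨L, hL⟩ := crt_general k e (fun i => (he i).1) (fun i => (ℓv i : ℤ)) hcompat
    set M : ℕ := Finset.univ.lcm e with hM
    have hM0 : M ≠ 0 := by
      intro h0
      obtain ⟨i, _, hei⟩ := Finset.lcm_eq_zero_iff.mp h0
      exact (he i).1.ne' hei
    have hM1 : (1 : ℤ) ≤ (M : ℤ) := by exact_mod_cast Nat.one_le_iff_ne_zero.mpr hM0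
    set N : ℤ := L + (L.natAbs : ℤ) * M with hN
    have hN0 : 0 ≤ N := by
      have h1 : (L.natAbs : ℤ) * 1 ≤ (L.natAbs : ℤ) * M :=
        mul_le_mul_of_nonneg_left hM1 (by positivity)
      have h2 : -L ≤ (L.natAbs : ℤ) := by
        rw [← Int.abs_eq_natAbs]; exact neg_le_abs L
      simp only [hN]; nlinarith
    refine ⟨N.toNat, ?_⟩
    have hNc : (N.toNat : ℤ) = N := Int.toNat_of_nonneg hN0
    have key : ∀ i, (shiftL F ^ N.toNat) (sc i) = sc' i := by
      intro i
      have hdvd : (e i : ℤ) ∣ (N.toNat : ℤ) - (ℓv i : ℤ) := by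
        rw [hNc, hN]
        have d1 : (e i : ℤ) ∣ L - ℓv i := hL i
        have d2 : (e i : ℤ) ∣ (M : ℤ) :=
          Int.natCast_dvd_natCast.mpr (Finset.dvd_lcm (Finset.mem_univ i))
        have : L + (L.natAbs : ℤ) * M - ℓv i = (L - ℓv i) + (L.natAbs : ℤ) * M := by ring
        rw [this]
        exact dvd_add d1 (Dvd.dvd.mul_left d2 _)
      rw [period_shift_eq (he i).1 (he i).2.1 hdvd]
      exact hshift i
    rw [map_sum]
    exact (Finset.sum_congr rfl (fun i _ => (key i).symm))
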